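/- For a, a', a'' in W, writing T_a T_{a'} T_{a''} = Σ_b f(a,a',a'',b) T_b with f(a,a',a'',b) ∈ ℤ[q] and setting n = ℓ(a)+ℓ(a''), the coefficient of q^n in f(a,a',a'',a') is nonnegative, the coefficient of q^i in f(a,a',a'',a') vanishes for i > n, and the coefficient of q^n equals 1 if the support of a is contained in the left descent set of a' and the support of a'' is contained in the right descent set of a'. -/

import Mathlib

open Polynomial

/-- The support of `w`: the set of simple-reflection indices appearing in some
(equivalently, any) reduced word for `w`. -/
def CoxeterSystem.support {B W : Type} [Group W] {M : CoxeterMatrix B}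
    (cs : CoxeterSystem M W) (w : W) : Set B :=
  {i | ∃ l : List B, cs.IsReduced l ∧ cs.wordProd l = w ∧ i ∈ l}

open scoped Classical

section Aux

variable {B W : Type} [Group W] {M : CoxeterMatrix B} (cs : CoxeterSystem M W)
  {H : Type} [Ring H] [Algebra (Polynomial ℚ) H] (T : Module.Basis W (Polynomial ℚ) H)

lemma Ts_sq
    (hquad : ∀ i : B, (T (cs.simple i) + 1) * (T (cs.simple i) - algebraMap (Polynomial ℚ) H X) = 0)
    (i : B) :
    T (cs.simple i) * T (cs.simple i) = ((X : Polynomial ℚ) - 1) • T (cs.simple i) + (X : Polynomial ℚ) • (1 : H) := by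
  have h := hquad i
  have hc : T (cs.simple i) * algebraMap (Polynomial ℚ) H X
      = algebraMap (Polynomial ℚ) H X * T (cs.simple i) := (Algebra.commutes _ _).symm
  have h2 : T (cs.simple i) * T (cs.simple i) + T (cs.simple i)
      - (algebraMap (Polynomial ℚ) H X * T (cs.simple i) + algebraMap (Polynomial ℚ) H X) = 0 := by
    rw [← h]; noncomm_ring [hc]
  have h3 : T (cs.simple i) * T (cs.simple i)
      = algebraMap (Polynomial ℚ) H X * T (cs.simple i) + algebraMap (Polynomial ℚ) H X
        - T (cs.simple i) := by
    have := sub_eq_zero.mp h2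
    linear_combination (norm := noncomm_ring) this
  rw [h3, Algebra.smul_def ((X : Polynomial ℚ) - 1), Algebra.smul_def (X : Polynomial ℚ),
    map_sub, map_one, mul_one]
  noncomm_ring


lemma mulSimpleLeft
    (hmul : ∀ w w' : W, cs.length (w * w') = cs.length w + cs.length w' →
      T w * T w' = T (w * w'))
    (hquad : ∀ i : B, (T (cs.simple i) + 1) * (T (cs.simple i) - algebraMap (Polynomial ℚ) H X) = 0)
    (i : B) (w : W) :
    T (cs.simple i) * T w =
      if cs.IsLeftDescent w i
      then (X : Polynomial ℚ) • T (cs.simple i * w) + ((X : Polynomial ℚ) - 1) • T w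
      else T (cs.simple i * w) := by
  by_cases hd : cs.IsLeftDescent w i
  · rw [if_pos hd]
    have hw : cs.simple i * (cs.simple i * w) = w := cs.simple_mul_simple_cancel_left i
    have hdl : cs.length (cs.simple i * w) + 1 = cs.length w := cs.isLeftDescent_iff.mp hd
    have hlen : cs.length (cs.simple i * (cs.simple i * w))
        = cs.length (cs.simple i) + cs.length (cs.simple i * w) := by
      rw [hw, cs.length_simple]; omega
    have hTw : T (cs.simple i) * T (cs.simple i * w) = T w := by
      rw [hmul _ _ hlen, hw]
    calc T (cs.simple i) * T w
        = T (cs.simple i) * T (cs.simple i) * T (cs.simple i * w) := by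
          rw [mul_assoc, hTw]
      _ = (((X : Polynomial ℚ) - 1) • T (cs.simple i) + (X : Polynomial ℚ) • (1 : H))
            * T (cs.simple i * w) := by rw [Ts_sq cs T hquad i]
      _ = ((X : Polynomial ℚ) - 1) • (T (cs.simple i) * T (cs.simple i * w))
            + (X : Polynomial ℚ) • T (cs.simple i * w) := by
          rw [add_mul, smul_mul_assoc, smul_mul_assoc, one_mul]
      _ = (X : Polynomial ℚ) • T (cs.simple i * w) + ((X : Polynomial ℚ) - 1) • T w := by
          rw [hTw, add_comm]
  · rw [if_neg hd]
    have hlen : cs.length (cs.simple i * w) = cs.length (cs.simple i) + cs.length w := by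
      rw [cs.length_simple, cs.not_isLeftDescent_iff.mp hd, add_comm]
    exact hmul _ _ hlen

lemma mulSimpleRight
    (hmul : ∀ w w' : W, cs.length (w * w') = cs.length w + cs.length w' →
      T w * T w' = T (w * w'))
    (hquad : ∀ i : B, (T (cs.simple i) + 1) * (T (cs.simple i) - algebraMap (Polynomial ℚ) H X) = 0)
    (i : B) (w : W) :
    T w * T (cs.simple i) =
      if cs.IsRightDescent w i
      then (X : Polynomial ℚ) • T (w * cs.simple i) + ((X : Polynomial ℚ) - 1) • T w
      else T (w * cs.simple i) := by
  by_cases hd : cs.IsRightDescent w i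
  · rw [if_pos hd]
    have hw : w * cs.simple i * cs.simple i = w := cs.simple_mul_simple_cancel_right i
    have hdl : cs.length (w * cs.simple i) + 1 = cs.length w := cs.isRightDescent_iff.mp hd
    have hlen : cs.length (w * cs.simple i * cs.simple i)
        = cs.length (w * cs.simple i) + cs.length (cs.simple i) := by
      rw [hw, cs.length_simple]; omega
    have hTw : T (w * cs.simple i) * T (cs.simple i) = T w := by
      rw [hmul _ _ hlen, hw]
    calc T w * T (cs.simple i)
        = T (w * cs.simple i) * (T (cs.simple i) * T (cs.simple i)) := by
          rw [← mul_assoc, hTw]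
      _ = T (w * cs.simple i) *
            (((X : Polynomial ℚ) - 1) • T (cs.simple i) + (X : Polynomial ℚ) • (1 : H)) := by
          rw [Ts_sq cs T hquad i]
      _ = ((X : Polynomial ℚ) - 1) • (T (w * cs.simple i) * T (cs.simple i))
            + (X : Polynomial ℚ) • T (w * cs.simple i) := by
          rw [mul_add, mul_smul_comm, mul_smul_comm, mul_one]
      _ = (X : Polynomial ℚ) • T (w * cs.simple i) + ((X : Polynomial ℚ) - 1) • T w := by
          rw [hTw, add_comm]
  · rw [if_neg hd]
    have hlen : cs.length (w * cs.simple i) = cs.length w + cs.length (cs.simple i) := by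
      rw [cs.length_simple, cs.not_isRightDescent_iff.mp hd]
    exact hmul _ _ hlen


lemma reprMulSimpleLeft
    (hmul : ∀ w w' : W, cs.length (w * w') = cs.length w + cs.length w' →
      T w * T w' = T (w * w'))
    (hquad : ∀ i : B, (T (cs.simple i) + 1) * (T (cs.simple i) - algebraMap (Polynomial ℚ) H X) = 0)
    (i : B) (h : H) (u : W) :
    T.repr (T (cs.simple i) * h) u =
      if cs.IsLeftDescent u i
      then T.repr h (cs.simple i * u) + ((X : Polynomial ℚ) - 1) * T.repr h u
      else (X : Polynomial ℚ) * T.repr h (cs.simple i * u) := by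
  have cancel : ∀ v : W, cs.simple i * (cs.simple i * v) = v :=
    fun v => cs.simple_mul_simple_cancel_left i
  have iff1 : ∀ w : W, cs.simple i * w = u ↔ w = cs.simple i * u := by
    intro w
    constructor
    · rintro rfl; rw [cancel]
    · rintro rfl; rw [cancel]
  by_cases hd : cs.IsLeftDescent u i
  · rw [if_pos hd]
    have key : (Finsupp.lapply u : (W →₀ Polynomial ℚ) →ₗ[Polynomial ℚ] Polynomial ℚ).comp
        ((T.repr : H →ₗ[Polynomial ℚ] (W →₀ Polynomial ℚ)).comp
          (LinearMap.mulLeft (Polynomial ℚ) (T (cs.simple i))))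
      = (Finsupp.lapply (cs.simple i * u)).comp
            (T.repr : H →ₗ[Polynomial ℚ] (W →₀ Polynomial ℚ))
          + ((X : Polynomial ℚ) - 1) • (Finsupp.lapply u).comp
            (T.repr : H →ₗ[Polynomial ℚ] (W →₀ Polynomial ℚ)) := by
      apply T.ext
      intro w
      simp only [LinearMap.comp_apply, LinearMap.add_apply, LinearMap.smul_apply,
        LinearMap.mulLeft_apply, LinearEquiv.coe_coe, Finsupp.lapply_apply, smul_eq_mul,
        Module.Basis.repr_self]
      rw [mulSimpleLeft cs T hmul hquad i w]
      by_cases hdw : cs.IsLeftDescent w i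
      · rw [if_pos hdw]
        have h1 : ¬ (cs.simple i * w = u) := by
          intro he
          have h2 : w = cs.simple i * u := (iff1 w).mp he
          have l1 := cs.isLeftDescent_iff.mp hd
          have l2 := cs.isLeftDescent_iff.mp hdw
          rw [← he] at l1
          rw [cancel] at l1
          omega
        have h2 : ¬ (w = cs.simple i * u) := fun he => h1 ((iff1 w).mpr he)
        simp only [map_add, map_smul, Module.Basis.repr_self, Finsupp.add_apply, Finsupp.smul_apply,
          Finsupp.single_apply, h1, h2, if_false, smul_eq_mul, mul_zero, zero_add, add_zero]
      · rw [if_neg hdw]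
        have h3 : ¬ (w = u) := by rintro rfl; exact hdw hd
        simp only [Module.Basis.repr_self, Finsupp.single_apply, iff1 w, h3, if_false, mul_zero, add_zero]
    exact LinearMap.congr_fun key h
  · rw [if_neg hd]
    have key : (Finsupp.lapply u : (W →₀ Polynomial ℚ) →ₗ[Polynomial ℚ] Polynomial ℚ).comp
        ((T.repr : H →ₗ[Polynomial ℚ] (W →₀ Polynomial ℚ)).comp
          (LinearMap.mulLeft (Polynomial ℚ) (T (cs.simple i))))
      = (X : Polynomial ℚ) • (Finsupp.lapply (cs.simple i * u)).comp
            (T.repr : H →ₗ[Polynomial ℚ] (W →₀ Polynomial ℚ)) := by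
      apply T.ext
      intro w
      simp only [LinearMap.comp_apply, LinearMap.smul_apply,
        LinearMap.mulLeft_apply, LinearEquiv.coe_coe, Finsupp.lapply_apply, smul_eq_mul,
        Module.Basis.repr_self]
      rw [mulSimpleLeft cs T hmul hquad i w]
      by_cases hdw : cs.IsLeftDescent w i
      · rw [if_pos hdw]
        have h3 : ¬ (w = u) := by rintro rfl; exact hd hdw
        simp only [map_add, map_smul, Module.Basis.repr_self, Finsupp.add_apply, Finsupp.smul_apply,
          Finsupp.single_apply, iff1 w, h3, if_false, smul_eq_mul, mul_zero, add_zero]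
      · rw [if_neg hdw]
        have h1 : ¬ (cs.simple i * w = u) := by
          intro he
          apply hd
          have l2 := cs.not_isLeftDescent_iff.mp hdw
          rw [he] at l2
          have : cs.simple i * u = w := by rw [← he, cancel]
          unfold CoxeterSystem.IsLeftDescent
          rw [this]
          omega
        have h2 : ¬ (w = cs.simple i * u) := fun he => h1 ((iff1 w).mpr he)
        simp [Finsupp.single_apply, h1, h2]
    exact LinearMap.congr_fun key h

lemma reprMulSimpleRight
    (hmul : ∀ w w' : W, cs.length (w * w') = cs.length w + cs.length w' →
      T w * T w' = T (w * w'))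
    (hquad : ∀ i : B, (T (cs.simple i) + 1) * (T (cs.simple i) - algebraMap (Polynomial ℚ) H X) = 0)
    (i : B) (h : H) (u : W) :
    T.repr (h * T (cs.simple i)) u =
      if cs.IsRightDescent u i
      then T.repr h (u * cs.simple i) + ((X : Polynomial ℚ) - 1) * T.repr h u
      else (X : Polynomial ℚ) * T.repr h (u * cs.simple i) := by
  have cancel : ∀ v : W, v * cs.simple i * cs.simple i = v :=
    fun v => cs.simple_mul_simple_cancel_right i
  have iff1 : ∀ w : W, w * cs.simple i = u ↔ w = u * cs.simple i := by
    intro w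
    constructor
    · rintro rfl; rw [cancel]
    · rintro rfl; rw [cancel]
  by_cases hd : cs.IsRightDescent u i
  · rw [if_pos hd]
    have key : (Finsupp.lapply u : (W →₀ Polynomial ℚ) →ₗ[Polynomial ℚ] Polynomial ℚ).comp
        ((T.repr : H →ₗ[Polynomial ℚ] (W →₀ Polynomial ℚ)).comp
          (LinearMap.mulRight (Polynomial ℚ) (T (cs.simple i))))
      = (Finsupp.lapply (u * cs.simple i)).comp
            (T.repr : H →ₗ[Polynomial ℚ] (W →₀ Polynomial ℚ))
          + ((X : Polynomial ℚ) - 1) • (Finsupp.lapply u).comp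
            (T.repr : H →ₗ[Polynomial ℚ] (W →₀ Polynomial ℚ)) := by
      apply T.ext
      intro w
      simp only [LinearMap.comp_apply, LinearMap.add_apply, LinearMap.smul_apply,
        LinearMap.mulRight_apply, LinearEquiv.coe_coe, Finsupp.lapply_apply, smul_eq_mul,
        Module.Basis.repr_self]
      rw [mulSimpleRight cs T hmul hquad i w]
      by_cases hdw : cs.IsRightDescent w i
      · rw [if_pos hdw]
        have h1 : ¬ (w * cs.simple i = u) := by
          intro he
          have h2 : w = u * cs.simple i := (iff1 w).mp he
          have l1 := cs.isRightDescent_iff.mp hd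
          have l2 := cs.isRightDescent_iff.mp hdw
          rw [← he] at l1
          rw [cancel] at l1
          omega
        have h2 : ¬ (w = u * cs.simple i) := fun he => h1 ((iff1 w).mpr he)
        simp only [map_add, map_smul, Module.Basis.repr_self, Finsupp.add_apply, Finsupp.smul_apply,
          Finsupp.single_apply, h1, h2, if_false, smul_eq_mul, mul_zero, zero_add, add_zero]
      · rw [if_neg hdw]
        have h3 : ¬ (w = u) := by rintro rfl; exact hdw hd
        simp only [Module.Basis.repr_self, Finsupp.single_apply, iff1 w, h3, if_false, mul_zero, add_zero]
    exact LinearMap.congr_fun key h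
  · rw [if_neg hd]
    have key : (Finsupp.lapply u : (W →₀ Polynomial ℚ) →ₗ[Polynomial ℚ] Polynomial ℚ).comp
        ((T.repr : H →ₗ[Polynomial ℚ] (W →₀ Polynomial ℚ)).comp
          (LinearMap.mulRight (Polynomial ℚ) (T (cs.simple i))))
      = (X : Polynomial ℚ) • (Finsupp.lapply (u * cs.simple i)).comp
            (T.repr : H →ₗ[Polynomial ℚ] (W →₀ Polynomial ℚ)) := by
      apply T.ext
      intro w
      simp only [LinearMap.comp_apply, LinearMap.smul_apply,
        LinearMap.mulRight_apply, LinearEquiv.coe_coe, Finsupp.lapply_apply, smul_eq_mul,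
        Module.Basis.repr_self]
      rw [mulSimpleRight cs T hmul hquad i w]
      by_cases hdw : cs.IsRightDescent w i
      · rw [if_pos hdw]
        have h3 : ¬ (w = u) := by rintro rfl; exact hd hdw
        simp only [map_add, map_smul, Module.Basis.repr_self, Finsupp.add_apply, Finsupp.smul_apply,
          Finsupp.single_apply, iff1 w, h3, if_false, smul_eq_mul, mul_zero, add_zero]
      · rw [if_neg hdw]
        have h1 : ¬ (w * cs.simple i = u) := by
          intro he
          apply hd
          have l2 := cs.not_isRightDescent_iff.mp hdw
          rw [he] at l2
          have : u * cs.simple i = w := by rw [← he, cancel]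
          unfold CoxeterSystem.IsRightDescent
          rw [this]
          omega
        have h2 : ¬ (w = u * cs.simple i) := fun he => h1 ((iff1 w).mpr he)
        simp [Finsupp.single_apply, h1, h2]
    exact LinearMap.congr_fun key h


lemma coeff_step (p q : Polynomial ℚ) (k : ℕ) :
    (p + ((X : Polynomial ℚ) - 1) * q).coeff (k + 1)
      = p.coeff (k + 1) + q.coeff k - q.coeff (k + 1) := by
  rw [coeff_add, sub_mul, one_mul, coeff_sub, coeff_X_mul]
  ring

lemma Lgen
    (hone : T 1 = 1)
    (hmul : ∀ w w' : W, cs.length (w * w') = cs.length w + cs.length w' →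
      T w * T w' = T (w * w'))
    (hquad : ∀ i : B, (T (cs.simple i) + 1) * (T (cs.simple i) - algebraMap (Polynomial ℚ) H X) = 0)
    (a' : W) :
    ∀ (l : List B), cs.IsReduced l → ∀ (h : H) (m : ℕ),
      (∀ b : W, ∀ j : ℕ, m < j → (T.repr h b).coeff j = 0) →
      (∀ b : W, 0 ≤ (T.repr h b).coeff m) →
      (∀ b : W, ∀ j : ℕ, l.length + m < j →
        (T.repr (T (cs.wordProd l) * h) b).coeff j = 0) ∧
      (∀ b : W, 0 ≤ (T.repr (T (cs.wordProd l) * h) b).coeff (l.length + m)) ∧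
      ((∀ i ∈ l, cs.IsLeftDescent a' i) → (T.repr h a').coeff m = 1 →
        (T.repr (T (cs.wordProd l) * h) a').coeff (l.length + m) = 1) := by
  intro l
  induction l with
  | nil =>
    intro _ h m h1 h2
    simp only [CoxeterSystem.wordProd_nil, hone, one_mul, List.length_nil, zero_add]
    exact ⟨h1, h2, fun _ h3 => h3⟩
  | cons i l ih =>
    intro hred h m h1 h2
    have hle := cs.length_wordProd_le l
    have hlee : cs.length (cs.wordProd (i :: l)) ≤ 1 + cs.length (cs.wordProd l) := by
      rw [cs.wordProd_cons]
      have := cs.length_mul_le (cs.simple i) (cs.wordProd l)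
      rwa [cs.length_simple] at this
    have hredval : cs.length (cs.wordProd (i :: l)) = l.length + 1 := by
      rw [hred]; simp
    have hredl : cs.IsReduced l := by
      unfold CoxeterSystem.IsReduced
      omega
    obtain ⟨ih1, ih2, ih3⟩ := ih hredl h m h1 h2
    have hlen : cs.length (cs.simple i * cs.wordProd l)
        = cs.length (cs.simple i) + cs.length (cs.wordProd l) := by
      rw [cs.length_simple, ← cs.wordProd_cons, hredval, hredl]
      omega
    have hT : T (cs.wordProd (i :: l)) * h
        = T (cs.simple i) * (T (cs.wordProd l) * h) := by
      rw [cs.wordProd_cons, ← hmul _ _ hlen, mul_assoc]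
    have hidx : (i :: l).length + m = (l.length + m) + 1 := by simp; omega
    refine ⟨?_, ?_, ?_⟩
    · intro b j hj
      rw [hT, reprMulSimpleLeft cs T hmul hquad]
      obtain ⟨j', rfl⟩ : ∃ j', j = j' + 1 := ⟨j - 1, by omega⟩
      have hj' : l.length + m < j' := by rw [hidx] at hj; omega
      by_cases hd : cs.IsLeftDescent b i
      · rw [if_pos hd, coeff_step]
        rw [ih1 _ _ (by omega), ih1 _ _ hj', ih1 _ _ (by omega)]
        ring
      · rw [if_neg hd, coeff_X_mul, ih1 _ _ hj']
    · intro b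
      rw [hT, reprMulSimpleLeft cs T hmul hquad, hidx]
      by_cases hd : cs.IsLeftDescent b i
      · rw [if_pos hd, coeff_step]
        rw [ih1 (cs.simple i * b) (l.length + m + 1) (by omega),
          ih1 b (l.length + m + 1) (by omega)]
        simpa using ih2 b
      · rw [if_neg hd, coeff_X_mul]
        exact ih2 _
    · intro hdes h3
      rw [hT, reprMulSimpleLeft cs T hmul hquad, hidx]
      have hd : cs.IsLeftDescent a' i := hdes i (by simp)
      rw [if_pos hd, coeff_step]
      rw [ih1 (cs.simple i * a') (l.length + m + 1) (by omega),
        ih1 a' (l.length + m + 1) (by omega),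
        ih3 (fun j hj => hdes j (by simp [hj])) h3]
      norm_num

lemma Rgen
    (hone : T 1 = 1)
    (hmul : ∀ w w' : W, cs.length (w * w') = cs.length w + cs.length w' →
      T w * T w' = T (w * w'))
    (hquad : ∀ i : B, (T (cs.simple i) + 1) * (T (cs.simple i) - algebraMap (Polynomial ℚ) H X) = 0)
    (a' : W) :
    ∀ (r : List B), cs.IsReduced r →
      (∀ b : W, ∀ j : ℕ, r.length < j →
        (T.repr (T a' * T (cs.wordProd r)) b).coeff j = 0) ∧
      (∀ b : W, 0 ≤ (T.repr (T a' * T (cs.wordProd r)) b).coeff r.length) ∧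
      ((∀ i ∈ r, cs.IsRightDescent a' i) →
        (T.repr (T a' * T (cs.wordProd r)) a').coeff r.length = 1) := by
  intro r
  induction r using List.reverseRecOn with
  | nil =>
    intro _
    simp only [CoxeterSystem.wordProd_nil, hone, mul_one, List.length_nil, Module.Basis.repr_self]
    refine ⟨?_, ?_, ?_⟩
    · intro b j hj
      rw [Finsupp.single_apply]
      split_ifs
      · rw [coeff_one, if_neg (by omega)]
      · simp
    · intro b
      rw [Finsupp.single_apply]
      split_ifs <;> simp
    · intro _
      simp
  | append_singleton r i ih =>
    intro hred
    have hle := cs.length_wordProd_le r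
    have hlee : cs.length (cs.wordProd (r ++ [i])) ≤ cs.length (cs.wordProd r) + 1 := by
      rw [cs.wordProd_append, cs.wordProd_singleton]
      have := cs.length_mul_le (cs.wordProd r) (cs.simple i)
      rwa [cs.length_simple] at this
    have hredval : cs.length (cs.wordProd (r ++ [i])) = r.length + 1 := by
      rw [hred]; simp
    have hredr : cs.IsReduced r := by
      unfold CoxeterSystem.IsReduced
      omega
    obtain ⟨ih1, ih2, ih3⟩ := ih hredr
    have hlen : cs.length (cs.wordProd r * cs.simple i)
        = cs.length (cs.wordProd r) + cs.length (cs.simple i) := by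
      rw [cs.length_simple, ← cs.wordProd_singleton (M := M) i, ← cs.wordProd_append, hredval,
        hredr]
    have hT : T a' * T (cs.wordProd (r ++ [i]))
        = (T a' * T (cs.wordProd r)) * T (cs.simple i) := by
      rw [cs.wordProd_append, cs.wordProd_singleton, ← hmul _ _ hlen, mul_assoc]
    have hidx : (r ++ [i]).length = r.length + 1 := by simp
    refine ⟨?_, ?_, ?_⟩
    · intro b j hj
      rw [hT, reprMulSimpleRight cs T hmul hquad]
      obtain ⟨j', rfl⟩ : ∃ j', j = j' + 1 := ⟨j - 1, by omega⟩
      have hj' : r.length < j' := by rw [hidx] at hj; omega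
      by_cases hd : cs.IsRightDescent b i
      · rw [if_pos hd, coeff_step]
        rw [ih1 _ _ (by omega), ih1 _ _ hj', ih1 _ _ (by omega)]
        ring
      · rw [if_neg hd, coeff_X_mul, ih1 _ _ hj']
    · intro b
      rw [hT, reprMulSimpleRight cs T hmul hquad, hidx]
      by_cases hd : cs.IsRightDescent b i
      · rw [if_pos hd, coeff_step]
        rw [ih1 (b * cs.simple i) (r.length + 1) (by omega),
          ih1 b (r.length + 1) (by omega)]
        simpa using ih2 b
      · rw [if_neg hd, coeff_X_mul]
        exact ih2 _
    · intro hdes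
      rw [hT, reprMulSimpleRight cs T hmul hquad, hidx]
      have hd : cs.IsRightDescent a' i := hdes i (by simp)
      rw [if_pos hd, coeff_step]
      rw [ih1 (a' * cs.simple i) (r.length + 1) (by omega),
        ih1 a' (r.length + 1) (by omega),
        ih3 (fun j hj => hdes j (by simp [hj]))]
      norm_num

end Aux

/-- with `f(a,a',a'',b)` the coordinates of `T a * T a' * T a''` in the basis
and `n = ℓ(a) + ℓ(a'')`: the coefficient of `q^n` in `f(a,a',a'',a')` is nonnegative, the
coefficient of `q^i` vanishes for `i > n`, and the coefficient of `q^n` is `1` if the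
support of `a` is contained in the left descent set of `a'` and the support of `a''`
is contained in the right descent set of `a'`. -/
theorem hecke_triple_product_diagonal_coeff
    {B W : Type} [Group W] [Finite W] {M : CoxeterMatrix B} (cs : CoxeterSystem M W)
    (H : Type) [Ring H] [Algebra (Polynomial ℚ) H]
    (T : Module.Basis W (Polynomial ℚ) H)
    (hone : T 1 = 1)
    (hmul : ∀ w w' : W, cs.length (w * w') = cs.length w + cs.length w' →
      T w * T w' = T (w * w'))
    (hquad : ∀ i : B, (T (cs.simple i) + 1) * (T (cs.simple i) - algebraMap (Polynomial ℚ) H X) = 0)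
    (a a' a'' : W) (n : ℕ) (hn : n = cs.length a + cs.length a'') :
    0 ≤ (T.repr (T a * T a' * T a'') a').coeff n ∧
    (∀ i : ℕ, n < i → (T.repr (T a * T a' * T a'') a').coeff i = 0) ∧
    ((∀ i ∈ cs.support a, cs.IsLeftDescent a' i) →
      (∀ i ∈ cs.support a'', cs.IsRightDescent a' i) →
      (T.repr (T a * T a' * T a'') a').coeff n = 1) := by
  obtain ⟨l, hl, rfl⟩ := cs.exists_reduced_word' a
  obtain ⟨r, hr, rfl⟩ := cs.exists_reduced_word' a''
  obtain ⟨r1, r2, r3⟩ := Rgen cs T hone hmul hquad a' r hr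
  obtain ⟨l1, l2, l3⟩ := Lgen cs T hone hmul hquad a' l hl
    (T a' * T (cs.wordProd r)) r.length r1 r2
  have hn' : n = l.length + r.length := by
    rw [hn, hl, hr]
  have hassoc : T (cs.wordProd l) * T a' * T (cs.wordProd r)
      = T (cs.wordProd l) * (T a' * T (cs.wordProd r)) := mul_assoc _ _ _
  rw [hassoc, hn']
  refine ⟨l2 a', fun j hj => l1 a' j hj, fun hL hR => ?_⟩
  refine l3 (fun i hi => hL i ⟨l, hl, rfl, hi⟩) (r3 (fun i hi => hR i ⟨r, hr, rfl, hi⟩))
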